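/- Let f : ℝ^m → ℝ be C² satisfying (A1) (L_f-Lipschitz gradient) and (A2) (⟨∇f(x),x⟩ ≥ m_f‖x‖² - c for ‖x‖ ≥ R). Define A(x) := Diag(∇f(x)) · H_f(x) where H_f is the Hessian. Then the set D_A† := {x ∈ ℝ^m : det A(x) = 0} is not all of ℝ^m; that is, there exists x ∈ ℝ^m with det(Diag(∇f(x)) H_f(x)) ≠ 0. -/

import Mathlib

open MeasureTheory Filter InnerProductSpace Set

theorem grad_surj {m : ℕ} (f : EuclideanSpace ℝ (Fin m) → ℝ) (hf : ContDiff ℝ 2 f)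
    (mf c R : ℝ) (hmf : 0 < mf) (hc : 0 ≤ c) (hR : 0 < R)
    (hA2 : ∀ x : EuclideanSpace ℝ (Fin m), R ≤ ‖x‖ →
      mf * ‖x‖^2 - c ≤ (inner ℝ (gradient f x) x : ℝ))
    (y : EuclideanSpace ℝ (Fin m)) : ∃ x, gradient f x = y := by
  let E := EuclideanSpace ℝ (Fin m)
  have hdf : Differentiable ℝ f := hf.differentiable (by norm_num)
  -- pairing
  have hpair : ∀ x v : E, fderiv ℝ f x v = (inner ℝ (gradient f x) v : ℝ) := by
    intro x v
    exact (InnerProductSpace.toDual_symm_apply).symm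
  -- lower bound on f outside ball R
  obtain ⟨B, hB⟩ : ∃ B, ∀ z ∈ Metric.closedBall (0:E) R, B ≤ f z := by
    obtain ⟨B, hB⟩ := ((isCompact_closedBall (0:E) R).image hdf.continuous).bddBelow
    exact ⟨B, fun z hz => hB ⟨z, hz, rfl⟩⟩
  have hlow : ∀ x : E, R ≤ ‖x‖ →
      B + mf/2*(‖x‖^2 - R^2) - (c/R)*(‖x‖ - R) ≤ f x := by
    intro x hx
    have hs : (0:ℝ) < ‖x‖ := lt_of_lt_of_le hR hx
    set u : E := ‖x‖⁻¹ • x with hu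
    have hnu : ‖u‖ = 1 := by
      rw [hu, norm_smul, norm_inv, norm_norm, inv_mul_cancel₀ hs.ne']
    set φ : ℝ → ℝ := fun t => f (t • u) - (mf/2 * t^2 - (c/R) * t) with hφ
    have hd : ∀ t : ℝ, HasDerivAt (fun t => f (t • u)) (fderiv ℝ f (t • u) u) t := by
      intro t
      have h1 : HasDerivAt (fun t : ℝ => t • u) u t := by
        simpa using (hasDerivAt_id t).smul_const u
      exact ((hdf (t • u)).hasFDerivAt.comp_hasDerivAt t h1)
    have hmono : MonotoneOn φ (Set.Ici R) := by
      have hdφ : ∀ t : ℝ, HasDerivAt φ (fderiv ℝ f (t • u) u - (mf * t - c/R)) t := by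
        intro t
        have h2 : HasDerivAt (fun t : ℝ => mf/2 * t^2 - (c/R) * t) (mf * t - c/R) t := by
          have := ((hasDerivAt_pow 2 t).const_mul (mf/2)).sub ((hasDerivAt_id t).const_mul (c/R))
          exact this.congr_deriv (by rw [show (2:ℕ) - 1 = 1 from rfl]; push_cast; ring)
        exact (hd t).sub h2
      apply monotoneOn_of_deriv_nonneg (convex_Ici R)
        (fun t ht => ((hdφ t).continuousAt.continuousWithinAt))
        (fun t ht => ((hdφ t).differentiableAt.differentiableWithinAt))
      intro t ht
      rw [interior_Ici] at ht
      have htR : R < t := ht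
      have ht0 : (0:ℝ) < t := lt_trans hR htR
      rw [(hdφ t).deriv]
      have hnt : ‖t • u‖ = t := by
        rw [norm_smul, hnu, Real.norm_eq_abs, abs_of_pos ht0, mul_one]
      have h3 := hA2 (t • u) (by rw [hnt]; exact htR.le)
      rw [hnt] at h3
      have h4 : (inner ℝ (gradient f (t • u)) (t • u) : ℝ) = t * fderiv ℝ f (t • u) u := by
        rw [hpair, real_inner_smul_right]
      rw [h4] at h3
      have h5 : mf * t - c / t ≤ fderiv ℝ f (t • u) u := by
        have hct : c / t * t = c := div_mul_cancel₀ c ht0.ne'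
        nlinarith [h3, ht0, hct]
      have h6 : c / t ≤ c / R := div_le_div_of_nonneg_left hc hR htR.le |>.trans_eq rfl
      linarith
    have hxu : ‖x‖ • u = x := by rw [hu, smul_smul, mul_inv_cancel₀ hs.ne', one_smul]
    have hRu : R • u ∈ Metric.closedBall (0:E) R := by
      simp [norm_smul, hnu, abs_of_pos hR, Metric.mem_closedBall, dist_zero_right]
    have := hmono (self_mem_Ici) hx hx
    rw [hφ] at this
    simp only [hxu] at this
    have hBR := hB _ hRu
    nlinarith [this, hBR]
  set fy : EuclideanSpace ℝ (Fin m) → ℝ := fun x => f x - inner ℝ y x with hfy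
  have hconty : Continuous fy := hdf.continuous.sub (continuous_const.inner continuous_id)
  set K : ℝ := c/R + ‖y‖ with hK
  have hqtop : Tendsto (fun t : ℝ => t * (mf/2 * t - K) + (B - mf/2*R^2 + c)) atTop atTop := by
    apply tendsto_atTop_add_const_right
    apply Tendsto.atTop_mul_atTop₀ tendsto_id
    have h1 : Tendsto (fun t : ℝ => mf/2 * t) atTop atTop :=
      tendsto_id.const_mul_atTop (by positivity)
    simpa [sub_eq_add_neg] using tendsto_atTop_add_const_right atTop (-K) h1
  have hcoerc : Tendsto fy (cocompact (EuclideanSpace ℝ (Fin m))) atTop := by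
    have hnc : Tendsto norm (cocompact (EuclideanSpace ℝ (Fin m))) atTop := tendsto_norm_cocompact_atTop
    have hRlarge := hnc.eventually_ge_atTop R
    apply tendsto_atTop_mono' (cocompact (EuclideanSpace ℝ (Fin m))) ?_
      (hqtop.comp hnc)
    filter_upwards [hRlarge] with x hx
    have h1 := hlow x hx
    have h2 : (inner ℝ y x : ℝ) ≤ ‖y‖ * ‖x‖ := real_inner_le_norm y x
    simp only [Function.comp, hfy, hK]
    nlinarith [h1, h2, div_mul_cancel₀ c hR.ne']
  obtain ⟨x0, hx0⟩ := hconty.exists_forall_le hcoerc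
  have hmin : IsLocalMin fy x0 := Filter.Eventually.of_forall hx0
  have h0 : fderiv ℝ fy x0 = 0 := hmin.fderiv_eq_zero
  have hsub : HasFDerivAt fy (fderiv ℝ f x0 - innerSL ℝ y) x0 :=
    ((hdf x0).hasFDerivAt).sub ((innerSL ℝ y).hasFDerivAt)
  have h1 : fderiv ℝ f x0 - innerSL ℝ y = 0 := by rw [← hsub.fderiv]; exact h0
  have h3 : fderiv ℝ f x0 = innerSL ℝ y := by rwa [sub_eq_zero] at h1
  have h2 : HasGradientAt f y x0 := by
    rw [hasGradientAt_iff_hasFDerivAt]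
    have h4 : (toDual ℝ (EuclideanSpace ℝ (Fin m))) y = innerSL ℝ y := by
      ext v; simp [InnerProductSpace.toDual_apply_apply]
    rw [h4, ← h3]
    exact (hdf x0).hasFDerivAt
  exact ⟨x0, h2.gradient⟩



/-- Under (A1) and (A2), the degeneracy set
`D_A† = {x : det(Diag(∇f(x)) H_f(x)) = 0}` is not all of `ℝ^m`:
there exists a point where the matrix `A(x)_{ij} = ∂_i f(x) · ∂_i∂_j f(x)`
is invertible. -/
theorem stmt9 {m : ℕ} (f : EuclideanSpace ℝ (Fin m) → ℝ) (hf : ContDiff ℝ 2 f)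
    (Lf mf c R : ℝ) (hLf : 0 < Lf) (hmf : 0 < mf) (hc : 0 ≤ c) (hR : 0 < R)
    (hA1 : ∀ x y : EuclideanSpace ℝ (Fin m),
      ‖gradient f x - gradient f y‖ ≤ Lf * ‖x - y‖)
    (hA2 : ∀ x : EuclideanSpace ℝ (Fin m), R ≤ ‖x‖ →
      mf * ‖x‖^2 - c ≤ (inner ℝ (gradient f x) x : ℝ)) :
    ∃ x : EuclideanSpace ℝ (Fin m),
      (Matrix.of fun i j : Fin m =>
        (fderiv ℝ f x (EuclideanSpace.single i 1)) *
          (fderiv ℝ (fun z => fderiv ℝ f z (EuclideanSpace.single j 1)) x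
            (EuclideanSpace.single i 1))).det ≠ 0 := by
  classical
  by_contra hcon
  push_neg at hcon
  rcases Nat.eq_zero_or_pos m with hm | hm
  · subst hm
    have := hcon 0
    rw [Matrix.det_isEmpty] at this
    exact one_ne_zero this
  haveI : Nonempty (Fin m) := ⟨⟨0, hm⟩⟩
  have hdf : Differentiable ℝ f := hf.differentiable (by norm_num)
  have hdf' : ContDiff ℝ 1 (fderiv ℝ f) := hf.fderiv_right (by norm_num)
  have hD2 : Differentiable ℝ (fderiv ℝ f) := hdf'.differentiable one_ne_zero
  set e : Fin m → EuclideanSpace ℝ (Fin m) := fun i => EuclideanSpace.single i 1 with he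
  set T : StrongDual ℝ (EuclideanSpace ℝ (Fin m)) →L[ℝ] EuclideanSpace ℝ (Fin m) :=
    ((InnerProductSpace.toDual ℝ (EuclideanSpace ℝ (Fin m))).symm.toContinuousLinearEquiv :
      _ ≃L[ℝ] _).toContinuousLinearMap with hT
  set D2 : EuclideanSpace ℝ (Fin m) →
      EuclideanSpace ℝ (Fin m) →L[ℝ] (EuclideanSpace ℝ (Fin m) →L[ℝ] ℝ) :=
    fun x => fderiv ℝ (fderiv ℝ f) x with hD2def
  have hgd : ∀ x, HasFDerivAt (gradient f) (T.comp (D2 x)) x := by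
    intro x
    exact T.hasFDerivAt.comp x (hD2 x).hasFDerivAt
  -- Hessian matrix
  set Hmat : EuclideanSpace ℝ (Fin m) → Matrix (Fin m) (Fin m) ℝ :=
    fun x => Matrix.of fun i j => fderiv ℝ (fun z => fderiv ℝ f z (e j)) x (e i) with hHmat
  have hHent : ∀ x i j, Hmat x i j = (D2 x) (e i) (e j) := by
    intro x i j
    have h1 : HasFDerivAt (fun z => fderiv ℝ f z (e j))
        ((ContinuousLinearMap.apply ℝ ℝ (e j)).comp (D2 x)) x :=
      (ContinuousLinearMap.apply ℝ ℝ (e j)).hasFDerivAt.comp x (hD2 x).hasFDerivAt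
    show fderiv ℝ (fun z => fderiv ℝ f z (e j)) x (e i) = _
    rw [h1.fderiv]
    rfl
  -- determinant identification
  set b := (EuclideanSpace.basisFun (Fin m) ℝ).toBasis with hb
  have hdet : ∀ x, (T.comp (D2 x)).det = (Hmat x).det := by
    intro x
    have h1 : (T.comp (D2 x)).det
        = (LinearMap.toMatrix b b ((T.comp (D2 x)) : _ →ₗ[ℝ] _)).det := by
      rw [LinearMap.det_toMatrix]
    rw [h1]
    have h2 : LinearMap.toMatrix b b ((T.comp (D2 x)) : _ →ₗ[ℝ] _) = Matrix.transpose (Hmat x) := by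
      ext i j
      rw [LinearMap.toMatrix_apply]
      have hbj : b j = e j := by
        simp [hb, he, EuclideanSpace.basisFun_apply]
      rw [hbj]
      show (b.repr (T ((D2 x) (e j)))) i = (Hmat x).transpose i j
      rw [Matrix.transpose_apply, hHent]
      have h5 : (b.repr (T ((D2 x) (e j)))) i = (T ((D2 x) (e j))) i := by
        rw [hb, (EuclideanSpace.basisFun (Fin m) ℝ).coe_toBasis_repr_apply,
          EuclideanSpace.basisFun_repr]
      rw [h5]
      have h4 : (T ((D2 x) (e j))) i = (inner ℝ (T ((D2 x) (e j))) (e i) : ℝ) := by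
        simp [he, EuclideanSpace.inner_single_right]
      rw [h4]
      exact InnerProductSpace.toDual_symm_apply
    rw [h2, Matrix.det_transpose]
  set S : Set (EuclideanSpace ℝ (Fin m)) := {x | (Hmat x).det = 0} with hS
  have hnull1 : volume (gradient f '' S) = 0 := by
    exact addHaar_image_eq_zero_of_det_fderivWithin_eq_zero volume
      (f' := fun x => T.comp (D2 x))
      (fun x hx => (hgd x).hasFDerivWithinAt)
      (fun x hx => by rw [hdet x]; exact hx)
  set V : Fin m → Submodule ℝ (EuclideanSpace ℝ (Fin m)) :=
    fun i => LinearMap.ker ((EuclideanSpace.proj i :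
      EuclideanSpace ℝ (Fin m) →L[ℝ] ℝ) : EuclideanSpace ℝ (Fin m) →ₗ[ℝ] ℝ) with hV
  have hVne : ∀ i, V i ≠ ⊤ := by
    intro i h
    have h1 : e i ∈ V i := h ▸ Submodule.mem_top
    have h2 : (EuclideanSpace.proj i) (e i) = (1:ℝ) := by simp [he]
    rw [hV] at h1
    simp only [LinearMap.mem_ker, ContinuousLinearMap.coe_coe] at h1
    rw [h1] at h2
    exact zero_ne_one h2
  have hnull2 : ∀ i, volume ((V i : Set (EuclideanSpace ℝ (Fin m)))) = 0 :=
    fun i => Measure.addHaar_submodule _ _ (hVne i)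
  have hcover : (Set.univ : Set (EuclideanSpace ℝ (Fin m))) ⊆
      (gradient f '' S) ∪ ⋃ i, (V i : Set (EuclideanSpace ℝ (Fin m))) := by
    intro y _
    obtain ⟨x, hx⟩ := grad_surj f hf mf c R hmf hc hR hA2 y
    by_cases hxS : x ∈ S
    · exact Or.inl ⟨x, hxS, hx⟩
    · right
      have hdetH : (Hmat x).det ≠ 0 := hxS
      have hA : (Matrix.of fun i j => (fderiv ℝ f x) (e i) * Hmat x i j).det = 0 := hcon x
      have hAeq : (Matrix.of fun i j => (fderiv ℝ f x) (e i) * Hmat x i j)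
          = Matrix.diagonal (fun i => fderiv ℝ f x (e i)) * Hmat x := by
        ext i j
        simp [Matrix.diagonal_mul]
      rw [hAeq, Matrix.det_mul, Matrix.det_diagonal] at hA
      have hprod : ∏ i, fderiv ℝ f x (e i) = 0 := by
        rcases mul_eq_zero.1 hA with h | h
        · exact h
        · exact absurd h hdetH
      obtain ⟨i, _, hi⟩ := Finset.prod_eq_zero_iff.1 hprod
      refine Set.mem_iUnion.2 ⟨i, ?_⟩
      have h6 : fderiv ℝ f x (e i) = (inner ℝ (gradient f x) (e i) : ℝ) :=
        (InnerProductSpace.toDual_symm_apply).symm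
      have h8 : y i = 0 := by
        have h9 : (inner ℝ y (e i) : ℝ) = y i := by
          simp [he, EuclideanSpace.inner_single_right]
        rw [← h9, ← hx, ← h6]
        exact hi
      show y ∈ V i
      rw [hV]
      simp only [SetLike.mem_coe, LinearMap.mem_ker]
      simpa using h8
  have hzero : volume (Set.univ : Set (EuclideanSpace ℝ (Fin m))) = 0 := by
    refine le_antisymm ?_ zero_le
    calc volume (Set.univ : Set (EuclideanSpace ℝ (Fin m)))
        ≤ volume ((gradient f '' S) ∪ ⋃ i, (V i : Set (EuclideanSpace ℝ (Fin m)))) :=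
          measure_mono hcover
      _ ≤ volume (gradient f '' S)
          + volume (⋃ i, (V i : Set (EuclideanSpace ℝ (Fin m)))) := measure_union_le _ _
      _ = 0 := by rw [hnull1, measure_iUnion_null hnull2, add_zero]
  exact isOpen_univ.measure_ne_zero volume Set.univ_nonempty hzero
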